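/- For every positive integer t, the 2t × 2t integer matrix 𝖬 is totally nonnegative: for every s ≥ 1 and all strictly increasing sequences of row indices i_1 < ⋯ < i_s and column indices j_1 < ⋯ < j_s in {1, …, 2t}, the determinant of the s × s submatrix (𝖬_{i_k, j_l})_{1 ≤ k, l ≤ s} is nonnegative. -/

import Mathlib

/-- Total nonnegativity for an `ℕ × ℕ`-indexed integer matrix. -/
def TNmat (A : ℕ → ℕ → ℤ) : Prop :=
  ∀ (s : ℕ) (r c : Fin s → ℕ), StrictMono r → StrictMono c →
    0 ≤ Matrix.det (Matrix.of fun k l => A (r k) (c l))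

theorem strictMono_perm_eq {s : ℕ} (σ : Equiv.Perm (Fin s)) (hσ : StrictMono σ) :
    ∀ k, σ k = k := by
  intro k
  have e : Fin s ≃o Fin s := StrictMono.orderIsoOfSurjective σ hσ σ.surjective
  have := Fin.coe_orderIso_apply (StrictMono.orderIsoOfSurjective σ hσ σ.surjective) k
  exact Fin.ext this

theorem tn_id : TNmat (fun i j => if i = j then 1 else 0) := by
  intro s r c hr hc
  by_cases h : ∀ k, r k = c k
  · have : (Matrix.of fun k l => if r k = c l then (1:ℤ) else 0) = 1 := by
      ext k l
      simp only [Matrix.of_apply, Matrix.one_apply]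
      by_cases hkl : k = l
      · simp [hkl, h l]
      · have : r k ≠ c l := fun he => hkl (hr.injective (by rw [he, ← h l]))
        simp [hkl, this]
    rw [this, Matrix.det_one]; norm_num
  · rw [Matrix.det_apply]
    have hz : ∀ σ ∈ (Finset.univ : Finset (Equiv.Perm (Fin s))),
        Equiv.Perm.sign σ • ∏ k, (Matrix.of fun k l =>
          if r k = c l then (1:ℤ) else 0) (σ k) k = 0 := by
      intro σ _
      by_cases hall : ∀ k, r (σ k) = c k
      · -- σ is strictly monotone, hence the identity, contradiction with h
        exfalso
        have hmono : StrictMono σ := by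
          intro a b hab
          have : c a < c b := hc hab
          rw [← hall a, ← hall b] at this
          exact hr.lt_iff_lt.mp this
        refine h fun k => ?_
        have hk := hall k
        rwa [strictMono_perm_eq σ hmono k] at hk
      · push_neg at hall
        obtain ⟨k, hk⟩ := hall
        have : (Matrix.of fun k l => if r k = c l then (1:ℤ) else 0) (σ k) k = 0 := by
          simp [hk]
        have h0 : (∏ k, (Matrix.of fun k l => if r k = c l then (1:ℤ) else 0) (σ k) k) = 0 :=
          Finset.prod_eq_zero (f := fun k => (Matrix.of fun k l =>
            if r k = c l then (1:ℤ) else 0) (σ k) k) (Finset.mem_univ k) this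
        rw [h0, smul_zero]
    rw [Finset.sum_eq_zero hz]

/-- One "elementary row operation" step preserving total nonnegativity:
adding a nonnegative multiple of an adjacent (shifted) row to each row. -/
theorem tn_step (A : ℕ → ℕ → ℤ) (hA : TNmat A) (g : ℕ → ℤ) (hg : ∀ i, 0 ≤ g i)
    (sh : ℕ → ℕ) (hsh : ∀ a b : ℕ, a < b → a ≤ sh b ∧ sh a ≤ b ∧ sh a ≤ sh b) :
    TNmat (fun i j => A i j + g i * A (sh i) j) := by
  intro s r c hr hc
  classical
  set v : Fin s → Bool → (Fin s → ℤ) :=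
    fun k b => if b then (fun l => A (r k) (c l)) else (fun l => g (r k) * A (sh (r k)) (c l))
    with hv
  have hrows : (Matrix.of fun k l => A (r k) (c l) + g (r k) * A (sh (r k)) (c l))
      = fun k => ∑ b : Bool, v k b := by
    funext k l
    simp [v, Fintype.sum_bool]
  have expand : (Matrix.detRowAlternating (R := ℤ) (n := Fin s) fun k => ∑ b : Bool, v k b)
      = ∑ p : Fin s → Bool, Matrix.detRowAlternating (R := ℤ) (n := Fin s)
          fun k => v k (p k) :=
    (Matrix.detRowAlternating (R := ℤ) (n := Fin s)).toMultilinearMap.map_sum v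
  rw [Matrix.det, hrows, expand]
  refine Finset.sum_nonneg fun p _ => ?_
  -- the term for `p` is (∏ w) * minor of A at rows r'
  set r' : Fin s → ℕ := fun k => if p k then r k else sh (r k) with hr'
  set w : Fin s → ℤ := fun k => if p k then 1 else g (r k) with hw
  have hterm : (Matrix.detRowAlternating (R := ℤ) (n := Fin s) fun k => v k (p k))
      = Matrix.det (Matrix.of fun k l => w k * A (r' k) (c l)) := by
    rw [Matrix.det]
    congr 1
    funext k l
    by_cases hp : p k <;> simp [v, r', w, hp]
  rw [hterm, show (Matrix.of fun k l => w k * A (r' k) (c l)).det = (∏ k, w k) * (Matrix.of fun k l => A (r' k) (c l)).det from Matrix.det_mul_column w _]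
  have hwnn : 0 ≤ ∏ k, w k := by
    refine Finset.prod_nonneg fun k _ => ?_
    by_cases hp : p k <;> simp [w, hp, hg]
  refine mul_nonneg hwnn ?_
  have hmono : Monotone r' := by
    intro a b hab
    rcases eq_or_lt_of_le hab with he | hlt
    · exact le_of_eq (by rw [he])
    have h3 := hsh (r a) (r b) (hr hlt)
    by_cases ha : p a <;> by_cases hb : p b <;>
      simp only [r', ha, hb, if_true, if_false]
    · exact (hr hlt).le
    · exact h3.1
    · exact h3.2.1
    · exact h3.2.2
  by_cases hinj : Function.Injective r'
  · exact hA s r' c (hmono.strictMono_of_injective hinj) hc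
  · rw [Function.not_injective_iff] at hinj
    obtain ⟨a, b, hab, hne⟩ := hinj
    have : Matrix.det (Matrix.of fun k l => A (r' k) (c l)) = 0 := by
      refine Matrix.det_zero_of_row_eq hne ?_
      funext l
      simp [hab]
    exact le_of_eq this.symm

/-- Upper-triangular banded binomial matrix: stage `q` of the upper factor chain. -/
def gMat (n q : ℕ) : ℕ → ℕ → ℤ :=
  fun i j => if i ≤ j then (((min q (n - 1 - i)).choose (j - i) : ℕ) : ℤ) else 0

/-- Stage `q` of the lower factor chain applied to `gMat (2t) t`. -/
def kMat (t q : ℕ) : ℕ → ℕ → ℤ :=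
  fun i j => if i < t then
      (if i ≤ j + min q i then (((t + min q i).choose (j + min q i - i) : ℕ) : ℤ) else 0)
    else gMat (2*t) t i j

theorem gMat_zero (n : ℕ) : gMat n 0 = fun i j => if i = j then 1 else 0 := by
  funext i j
  simp only [gMat]
  have hm : min 0 (n - 1 - i) = 0 := by omega
  rw [hm]
  rcases lt_trichotomy i j with h | h | h
  · obtain ⟨d, hd⟩ : ∃ d, j - i = d + 1 := ⟨j - i - 1, by omega⟩
    rw [if_pos h.le, hd, if_neg h.ne]
    simp
  · subst h
    simp
  · rw [if_neg (by omega), if_neg (by omega)]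

theorem gMat_succ (n q i j : ℕ) :
    gMat n (q+1) i j = gMat n q i j
      + (if i + q + 2 ≤ n then (1:ℤ) else 0) * gMat n q (i+1) j := by
  simp only [gMat]
  rcases lt_trichotomy i j with h | h | h
  · rw [if_pos h.le, if_pos h.le, if_pos (by omega : i + 1 ≤ j)]
    by_cases hn : i + q + 2 ≤ n
    · rw [if_pos hn]
      have h1 : min (q+1) (n-1-i) = q+1 := by omega
      have h2 : min q (n-1-i) = q := by omega
      have h3 : min q (n-1-(i+1)) = q := by omega
      rw [h1, h2, h3]
      obtain ⟨d, hd⟩ : ∃ d, j - i = d + 1 := ⟨j - i - 1, by omega⟩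
      have hd2 : j - (i+1) = d := by omega
      rw [hd, hd2, Nat.choose_succ_succ]
      push_cast
      ring
    · rw [if_neg hn]
      have h1 : min (q+1) (n-1-i) = n-1-i := by omega
      have h2 : min q (n-1-i) = n-1-i := by omega
      rw [h1, h2]
      ring
  · rw [if_pos (le_of_eq h), if_pos (le_of_eq h), if_neg (show ¬(i+1 ≤ j) by omega)]
    have hz : j - i = 0 := by omega
    rw [hz]
    simp
  · rw [if_neg (show ¬(i ≤ j) by omega), if_neg (show ¬(i ≤ j) by omega),
      if_neg (show ¬(i+1 ≤ j) by omega)]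
    ring

theorem tn_gMat (n q : ℕ) : TNmat (gMat n q) := by
  induction q with
  | zero => rw [gMat_zero]; exact tn_id
  | succ q ih =>
      have hstep := tn_step (gMat n q) ih (fun i => if i + q + 2 ≤ n then 1 else 0)
        (fun i => by split <;> norm_num) (fun i => i + 1)
        (fun a b hab => ⟨show a ≤ b + 1 by omega, show a + 1 ≤ b by omega,
          show a + 1 ≤ b + 1 by omega⟩)
      have he : (fun i j => gMat n q i j
          + (if i + q + 2 ≤ n then (1:ℤ) else 0) * gMat n q (i+1) j) = gMat n (q+1) := by
        funext i j
        rw [gMat_succ]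
      rwa [he] at hstep

theorem kMat_zero (t : ℕ) : kMat t 0 = gMat (2*t) t := by
  funext i j
  simp only [kMat]
  by_cases hi : i < t
  · rw [if_pos hi]
    have hm : min 0 i = 0 := by omega
    rw [hm, Nat.add_zero, Nat.add_zero]
    simp only [gMat]
    have hg : min t (2*t - 1 - i) = t := by omega
    rw [hg]
  · rw [if_neg hi]

theorem kMat_succ (t q i j : ℕ) :
    kMat t (q+1) i j = kMat t q i j
      + (if q+1 ≤ i ∧ i < t then (1:ℤ) else 0) * kMat t q (i-1) j := by
  by_cases hi : i < t
  · by_cases hq : q + 1 ≤ i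
    · have e1 : (if q+1 ≤ i ∧ i < t then (1:ℤ) else 0) = 1 := if_pos ⟨hq, hi⟩
      rw [e1, one_mul]
      simp only [kMat]
      rw [if_pos hi, if_pos hi, if_pos (by omega : i - 1 < t)]
      have h1 : min (q+1) i = q+1 := by omega
      have h2 : min q i = q := by omega
      have h3 : min q (i-1) = q := by omega
      rw [h1, h2, h3]
      rcases lt_trichotomy (j + q) (i - 1) with h | h | h
      · rw [if_neg (by omega), if_neg (by omega), if_neg (by omega)]
        ring
      · rw [if_pos (by omega), if_neg (by omega), if_pos (by omega)]
        have i1 : j + (q+1) - i = 0 := by omega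
        have i2 : j + q - (i-1) = 0 := by omega
        rw [i1, i2]
        simp
      · rw [if_pos (by omega), if_pos (by omega), if_pos (by omega)]
        obtain ⟨d, hd⟩ : ∃ d, j + q - i = d := ⟨j + q - i, rfl⟩
        have i1 : j + (q+1) - i = d + 1 := by omega
        have i2 : j + q - (i-1) = d + 1 := by omega
        rw [i1, i2, hd]
        have : t + (q+1) = (t+q) + 1 := by omega
        rw [this, Nat.choose_succ_succ]
        push_cast
        ring
    · have e1 : (if q+1 ≤ i ∧ i < t then (1:ℤ) else 0) = 0 := if_neg (by omega)
      rw [e1, zero_mul, add_zero]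
      simp only [kMat]
      have h1 : min (q+1) i = min q i := by omega
      rw [h1]
  · have e1 : (if q+1 ≤ i ∧ i < t then (1:ℤ) else 0) = 0 := if_neg (by omega)
    rw [e1, zero_mul, add_zero]
    simp only [kMat]
    rw [if_neg hi, if_neg hi]

theorem tn_kMat (t q : ℕ) : TNmat (kMat t q) := by
  induction q with
  | zero => rw [kMat_zero]; exact tn_gMat (2*t) t
  | succ q ih =>
      have hstep := tn_step (kMat t q) ih (fun i => if q+1 ≤ i ∧ i < t then 1 else 0)
        (fun i => by split <;> norm_num) (fun i => i - 1)
        (fun a b hab => ⟨show a ≤ b - 1 by omega, show a - 1 ≤ b by omega,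
          show a - 1 ≤ b - 1 by omega⟩)
      have he : (fun i j => kMat t q i j
          + (if q+1 ≤ i ∧ i < t then (1:ℤ) else 0) * kMat t q (i-1) j) = kMat t (q+1) := by
        funext i j
        rw [kMat_succ]
      rwa [he] at hstep

theorem kMat_last (t i j : ℕ) : kMat t (t-1) i j =
    if i < t then (((t + i).choose j : ℕ) : ℤ)
    else if i ≤ j then (((2 * t - i - 1).choose (j - i) : ℕ) : ℤ) else 0 := by
  simp only [kMat, gMat]
  by_cases hi : i < t
  · rw [if_pos hi, if_pos hi]
    have h1 : min (t-1) i = i := by omega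
    rw [h1, if_pos (by omega : i ≤ j + i)]
    have h2 : j + i - i = j := by omega
    rw [h2]
  · rw [if_neg hi, if_neg hi]
    by_cases hij : i ≤ j
    · rw [if_pos hij, if_pos hij]
      have hm : min t (2*t - 1 - i) = 2*t - i - 1 := by omega
      rw [hm]
    · rw [if_neg hij, if_neg hij]

/-- The `2t × 2t` integer block matrix `𝖬 = [[M1, M2], [0, M3]]`, where (in
1-based indices) `M1 = (C(t+i−1, j−1))`, `M2 = (C(t+i−1, t+j−1))` and
`M3 = (C(t−i, j−i))` are `t × t` matrices.  In 0-based global indices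
`i, j : Fin (2t)`, the top half (`i < t`) has entry `C(t+i, j)` and the bottom
half (`i ≥ t`) has entry `C(2t−i−1, j−i)` for `i ≤ j` and `0` otherwise. -/
def fujimotoM (t : ℕ) : Matrix (Fin (2 * t)) (Fin (2 * t)) ℤ :=
  fun i j =>
    if i.val < t then ((t + i.val).choose j.val : ℤ)
    else if i.val ≤ j.val then ((2 * t - i.val - 1).choose (j.val - i.val) : ℤ)
    else 0

/-- For every positive integer `t`, the matrix `𝖬` is totally nonnegative:
every minor (determinant of the square submatrix obtained by selecting rows
`i_1 < ⋯ < i_s` and columns `j_1 < ⋯ < j_s`) is nonnegative. -/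
theorem fujimotoM_totallyNonneg (t : ℕ) (ht : 1 ≤ t)
    (s : ℕ) (hs : 1 ≤ s)
    (r : Fin s → Fin (2 * t)) (c : Fin s → Fin (2 * t))
    (hr : StrictMono r) (hc : StrictMono c) :
    0 ≤ Matrix.det (fun k l => fujimotoM t (r k) (c l)) := by
  have h := tn_kMat t (t-1) s (fun k => (r k : ℕ)) (fun k => (c k : ℕ))
    (fun a b hab => hr hab) (fun a b hab => hc hab)
  have he : (Matrix.of fun k l => kMat t (t-1) ((r k : ℕ)) ((c l : ℕ)))
      = fun k l => fujimotoM t (r k) (c l) := by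
    funext k l
    rw [Matrix.of_apply, kMat_last]
    rfl
  rwa [he] at h
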